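/- Assume the CZ-decomposition setting in dimension n. There exist constants C > 0 and c ∈ (0,1) depending only on n such that for every Q ∈ CZ there is a finite sequence Q₁, Q₂, …, Q_L of cubes of CZ with: Q₁ = Q; Q_L is a keystone cube; (1+c_G)Q_l ∩ (1+c_G)Q_{l+1} ≠ ∅ for l = 1, …, L−1; and δ_{Q_k} ≤ C·(1−c)^{k−l}·δ_{Q_l} for all 1 ≤ l ≤ k ≤ L. -/

import Mathlib

noncomputable section

/-- The constant `c_G = 10⁻⁶`. -/
def cG : ℝ := 1 / 1000000

/-- A cube `Q = {a} + (−δ, δ]ⁿ` with center `c = a` and half-sidelength `d = δ`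
(so the sidelength of `Q` is `2d`). -/
structure Cube (n : ℕ) where
  c : Fin n → ℝ
  d : ℝ

namespace Cube

/-- The cube as a subset of `ℝⁿ`. -/
def toSet {n : ℕ} (Q : Cube n) : Set (Fin n → ℝ) :=
  {x | ∀ i, Q.c i - Q.d < x i ∧ x i ≤ Q.c i + Q.d}

/-- The sidelength `δ_Q` of a cube. -/
def side {n : ℕ} (Q : Cube n) : ℝ := 2 * Q.d

/-- The dilate `tQ`: same center, sidelength `t·δ_Q`. -/
def scale {n : ℕ} (t : ℝ) (Q : Cube n) : Cube n := ⟨Q.c, t * Q.d⟩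

/-- `Q` is a dyadic cube `∏ᵢ (jᵢ·2^k, (jᵢ+1)·2^k]`. -/
def Dyadic {n : ℕ} (Q : Cube n) : Prop :=
  ∃ k : ℤ, ∃ j : Fin n → ℤ, Q.d = (2 : ℝ) ^ k / 2 ∧
    ∀ i, Q.c i = ((j i : ℝ) + 1 / 2) * (2 : ℝ) ^ k

end Cube

/-- The CZ-decomposition setting: a partition `CZ` of `ℝⁿ` into dyadic cubes with
good geometry, and a finite set `E` with `#E ≥ 2` and `#(E ∩ 9Q) ≥ 2` for all `Q ∈ CZ`. -/
structure CZSetting (n : ℕ) where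
  CZ : Set (Cube n)
  E : Finset (Fin n → ℝ)
  dyadic : ∀ Q ∈ CZ, Q.Dyadic
  partition : ∀ x : Fin n → ℝ, ∃! Q, Q ∈ CZ ∧ x ∈ Q.toSet
  goodGeom : ∀ Q ∈ CZ, ∀ Q' ∈ CZ,
    ((Q.scale (1 + 10 * cG)).toSet ∩ (Q'.scale (1 + 10 * cG)).toSet).Nonempty →
      Q.side / 64 ≤ Q'.side ∧ Q'.side ≤ 64 * Q.side
  two_le_card : 2 ≤ E.card
  dense : ∀ Q ∈ CZ, 2 ≤ ((E : Set (Fin n → ℝ)) ∩ (Q.scale 9).toSet).ncard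

/-- `S` is a cluster of `E` (with parameter `A`): `S ⊆ E`, `#S ≥ 2` and
`dist(S, E∖S) ≥ A³·diam S` (with the convention `dist(S,∅) = +∞`). -/
def IsCluster {n : ℕ} (A : ℝ) (E S : Finset (Fin n → ℝ)) : Prop :=
  S ⊆ E ∧ 2 ≤ S.card ∧
  ∀ x ∈ S, ∀ y ∈ E \ S, A ^ 3 * Metric.diam (S : Set (Fin n → ℝ)) ≤ dist x y

/-- `Q` is interstellar: `diam(A¹⁰Q ∩ E) ≤ A⁻¹⁰·δ_Q` and `(1+3c_G)Q ∩ E = ∅`. -/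
def Interstellar {n : ℕ} (A : ℝ) (E : Finset (Fin n → ℝ)) (Q : Cube n) : Prop :=
  Metric.diam ((Q.scale (A ^ 10)).toSet ∩ (E : Set (Fin n → ℝ))) ≤ (A ^ 10)⁻¹ * Q.side ∧
  (Q.scale (1 + 3 * cG)).toSet ∩ (E : Set (Fin n → ℝ)) = ∅

/-- The halo `H(S)` of a cluster `S` with representative `xS`:
`{x : A·diam S < |x − xS| < A⁻¹·dist(S, E∖S)}` (with `dist(S,∅) = +∞`). -/
def Halo {n : ℕ} (A : ℝ) (E S : Finset (Fin n → ℝ)) (xS : Fin n → ℝ) :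
    Set (Fin n → ℝ) :=
  {x | A * Metric.diam (S : Set (Fin n → ℝ)) < dist x xS ∧
    ∀ y ∈ S, ∀ z ∈ E \ S, A * dist x xS < dist y z}

/-- `Q` is a keystone cube of `CZ`: every `Q' ∈ CZ` meeting `100Q` is at least as big. -/
def Keystone {n : ℕ} (CZ : Set (Cube n)) (Q : Cube n) : Prop :=
  Q ∈ CZ ∧ ∀ Q' ∈ CZ, (Q'.toSet ∩ (Q.scale 100).toSet).Nonempty → Q.side ≤ Q'.side

namespace CZLemma

variable {n : ℕ}

def Link (A A' : Cube n) : Prop :=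
  ((A.scale (1 + cG)).toSet ∩ (A'.scale (1 + cG)).toSet).Nonempty

lemma cG_pos : (0:ℝ) < cG := by norm_num [cG]

lemma abs_sub_center {Q : Cube n} {x : Fin n → ℝ} (hx : x ∈ Q.toSet) (i : Fin n) :
    |x i - Q.c i| ≤ Q.d := by
  have h := hx i
  exact abs_le.mpr ⟨by linarith [h.1], by linarith [h.2]⟩

lemma inter_nonempty_iff {c₁ c₂ : Fin n → ℝ} {d₁ d₂ : ℝ} (h₁ : 0 < d₁) (h₂ : 0 < d₂) :
    ((Cube.toSet ⟨c₁, d₁⟩) ∩ (Cube.toSet ⟨c₂, d₂⟩)).Nonempty ↔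
      ∀ i, |c₁ i - c₂ i| < d₁ + d₂ := by
  constructor
  · rintro ⟨x, hx₁, hx₂⟩ i
    have a := hx₁ i; have b := hx₂ i
    rw [abs_lt]
    exact ⟨by linarith [a.1, b.2], by linarith [a.2, b.1]⟩
  · intro h
    refine ⟨fun i => min (c₁ i + d₁) (c₂ i + d₂), fun i => ?_, fun i => ?_⟩
    · refine ⟨lt_min (by linarith) ?_, min_le_left _ _⟩
      have := abs_lt.mp (h i); linarith [this.1]
    · refine ⟨lt_min ?_ (by linarith), min_le_right _ _⟩
      have := abs_lt.mp (h i); linarith [this.2]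

variable (S : CZSetting n)

lemma d_pos {Q : Cube n} (hQ : Q ∈ S.CZ) : 0 < Q.d := by
  obtain ⟨k, j, hd, -⟩ := S.dyadic Q hQ
  rw [hd]; positivity

lemma center_mem {Q : Cube n} (h : 0 < Q.d) : Q.c ∈ Q.toSet :=
  fun i => ⟨by linarith, by linarith⟩

lemma eq_of_mem {Q Q' : Cube n} (hQ : Q ∈ S.CZ) (hQ' : Q' ∈ S.CZ) {x : Fin n → ℝ}
    (hx : x ∈ Q.toSet) (hx' : x ∈ Q'.toSet) : Q = Q' :=
  (S.partition x).unique ⟨hQ, hx⟩ ⟨hQ', hx'⟩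

/-- The unique CZ cube containing `x`. -/
def cubeAt (x : Fin n → ℝ) : Cube n := (S.partition x).exists.choose

lemma cubeAt_mem (x : Fin n → ℝ) : cubeAt S x ∈ S.CZ :=
  (S.partition x).exists.choose_spec.1

lemma mem_cubeAt (x : Fin n → ℝ) : x ∈ (cubeAt S x).toSet :=
  (S.partition x).exists.choose_spec.2

lemma cubeAt_eq {Q : Cube n} (hQ : Q ∈ S.CZ) {x : Fin n → ℝ} (hx : x ∈ Q.toSet) :
    cubeAt S x = Q :=
  eq_of_mem S (cubeAt_mem S x) hQ (mem_cubeAt S x) hx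

lemma goodGeom_d {Q Q' : Cube n} (hQ : Q ∈ S.CZ) (hQ' : Q' ∈ S.CZ)
    (h : ∀ i, |Q.c i - Q'.c i| < (1 + 10 * cG) * (Q.d + Q'.d)) :
    Q.d / 64 ≤ Q'.d ∧ Q'.d ≤ 64 * Q.d := by
  have hd := d_pos S hQ; have hd' := d_pos S hQ'
  have hne : ((Q.scale (1 + 10 * cG)).toSet ∩ (Q'.scale (1 + 10 * cG)).toSet).Nonempty := by
    have hpos : (0:ℝ) < (1 + 10 * cG) * Q.d := by have := cG_pos; positivity
    have hpos' : (0:ℝ) < (1 + 10 * cG) * Q'.d := by have := cG_pos; positivity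
    refine (inter_nonempty_iff hpos hpos').mpr fun i => ?_
    have := h i; nlinarith [cG_pos]
  have := S.goodGeom Q hQ Q' hQ' hne
  unfold Cube.side at this
  constructor <;> linarith [this.1, this.2]

lemma size_upper {B R : Cube n} (hB : B ∈ S.CZ) (hR : R ∈ S.CZ) {y : Fin n → ℝ}
    (hy : y ∈ R.toSet) (hclose : ∀ i, |y i - B.c i| ≤ 300 * B.d) :
    R.d ≤ 30000000 * B.d := by
  by_contra hcon
  push_neg at hcon
  have hdB := d_pos S hB; have hdR := d_pos S hR
  have h : ∀ i, |B.c i - R.c i| < (1 + 10 * cG) * (B.d + R.d) := by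
    intro i
    have h1 := abs_sub_center hy i
    have h2 := hclose i
    have : |B.c i - R.c i| ≤ |y i - B.c i| + |y i - R.c i| := by
      have := abs_sub (y i - B.c i) (y i - R.c i)
      calc |B.c i - R.c i| = |(y i - R.c i) - (y i - B.c i)| := by ring_nf
        _ ≤ |y i - R.c i| + |y i - B.c i| := abs_sub _ _
        _ = |y i - B.c i| + |y i - R.c i| := by ring
    have hcg : cG = 1/1000000 := rfl
    rw [hcg]; nlinarith
  have h2 := (goodGeom_d S hB hR h).2
  nlinarith

lemma dyadic_halving {Q Q' : Cube n} (hQ : Q ∈ S.CZ) (hQ' : Q' ∈ S.CZ)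
    (h : Q'.d < Q.d) : Q'.d ≤ Q.d / 2 := by
  obtain ⟨k, j, hd, -⟩ := S.dyadic Q hQ
  obtain ⟨k', j', hd', -⟩ := S.dyadic Q' hQ'
  rw [hd, hd'] at h ⊢
  have h2 : (2:ℝ) ^ k' < (2:ℝ) ^ k := by linarith
  have hk : k' < k := (zpow_lt_zpow_iff_right₀ (by norm_num : (1:ℝ) < 2)).mp h2
  have hk1 : k' ≤ k - 1 := by omega
  have : (2:ℝ) ^ k' ≤ (2:ℝ) ^ (k - 1) :=
    zpow_le_zpow_right₀ (by norm_num : (1:ℝ) ≤ 2) hk1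
  have he : (2:ℝ) ^ (k - 1) = (2:ℝ) ^ k / 2 := by
    rw [zpow_sub_one₀ (by norm_num : (2:ℝ) ≠ 0)]; ring
  rw [he] at this; linarith

lemma min_side (x0 : Fin n → ℝ) (R : ℝ) (hR : 0 ≤ R) :
    ∃ m : ℝ, 0 < m ∧ ∀ Q' ∈ S.CZ, ∀ y ∈ Q'.toSet, (∀ i, |y i - x0 i| ≤ R) → m ≤ Q'.d := by
  classical
  set K := Metric.closedBall x0 R with hK
  have hcomp : IsCompact K := isCompact_closedBall x0 R
  set f : (Fin n → ℝ) → Cube n := fun x => cubeAt S x with hf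
  have hfd : ∀ x, 0 < (f x).d := fun x => d_pos S (cubeAt_mem S x)
  set U : (Fin n → ℝ) → Set (Fin n → ℝ) := fun x => Metric.ball x (cG * (f x).d) with hU
  have hUo : ∀ x, IsOpen (U x) := fun x => Metric.isOpen_ball
  have hcov : K ⊆ ⋃ x, U x := fun x hx =>
    Set.mem_iUnion.mpr ⟨x, Metric.mem_ball_self (by have := cG_pos; have := hfd x; positivity)⟩
  obtain ⟨t, ht⟩ := hcomp.elim_finite_subcover U hUo hcov
  have hx0K : x0 ∈ K := Metric.mem_closedBall_self hR
  obtain ⟨x₀', hx₀'⟩ := Set.mem_iUnion₂.mp (ht hx0K)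
  have hne : t.Nonempty := ⟨x₀', hx₀'.1⟩
  refine ⟨(t.inf' hne fun x => (f x).d) / 64, by
    have : 0 < t.inf' hne fun x => (f x).d := (Finset.lt_inf'_iff hne).mpr fun b _ => hfd b
    linarith, ?_⟩
  intro Q' hQ' y hy hyR
  have hyK : y ∈ K := by
    rw [hK, Metric.mem_closedBall]
    rw [dist_pi_le_iff hR]
    intro i; rw [Real.dist_eq]; exact hyR i
  obtain ⟨x, hxt, hyx⟩ := Set.mem_iUnion₂.mp (ht hyK)
  have hdist : dist y x < cG * (f x).d := Metric.mem_ball.mp hyx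
  have hd' := d_pos S hQ'
  have hgeo : ∀ i, |(f x).c i - Q'.c i| < (1 + 10 * cG) * ((f x).d + Q'.d) := by
    intro i
    have h1 : |x i - (f x).c i| ≤ (f x).d := abs_sub_center (mem_cubeAt S x) i
    have h2 : |y i - Q'.c i| ≤ Q'.d := abs_sub_center hy i
    have h3 : |y i - x i| < cG * (f x).d := by
      calc |y i - x i| = dist (y i) (x i) := (Real.dist_eq _ _).symm
        _ ≤ dist y x := dist_le_pi_dist y x i
        _ < cG * (f x).d := hdist
    have habs : |(f x).c i - Q'.c i| ≤ |x i - (f x).c i| + |y i - x i| + |y i - Q'.c i| := by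
      calc |(f x).c i - Q'.c i| = |(-(x i - (f x).c i)) + (-(y i - x i)) + (y i - Q'.c i)| := by
            ring_nf
        _ ≤ |(-(x i - (f x).c i)) + (-(y i - x i))| + |y i - Q'.c i| := abs_add_le _ _
        _ ≤ |(-(x i - (f x).c i))| + |(-(y i - x i))| + |y i - Q'.c i| := by
            linarith [abs_add_le (-(x i - (f x).c i)) (-(y i - x i))]
        _ = |x i - (f x).c i| + |y i - x i| + |y i - Q'.c i| := by rw [abs_neg, abs_neg]
    have hcg : cG = 1/1000000 := rfl
    rw [hcg] at h3 ⊢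
    nlinarith [hfd x]
  have := (goodGeom_d S (cubeAt_mem S x) hQ' hgeo).1
  calc (t.inf' hne fun x => (f x).d) / 64 ≤ (f x).d / 64 := by
        have := Finset.inf'_le (fun x => (f x).d) hxt; linarith
    _ ≤ Q'.d := this

lemma grid_eq {B u u' : Cube n} (hB : B ∈ S.CZ) (hu : u ∈ S.CZ) (hu' : u' ∈ S.CZ)
    (hdu' : B.d ≤ u'.d) {x y : Fin n → ℝ}
    (hx : x ∈ u.toSet) (hy : y ∈ u'.toSet)
    (hphi : ∀ i, ⌈x i / (2 * B.d)⌉ = ⌈y i / (2 * B.d)⌉) : u = u' := by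
  obtain ⟨kB, jB, hdB, -⟩ := S.dyadic B hB
  obtain ⟨k', j', hd', hc'⟩ := S.dyadic u' hu'
  have hl : 2 * B.d = (2:ℝ) ^ kB := by rw [hdB]; ring
  have hlpos : (0:ℝ) < 2 * B.d := by rw [hl]; positivity
  have hk : kB ≤ k' := by
    have h2 : (2:ℝ) ^ kB ≤ (2:ℝ) ^ k' := by rw [hdB, hd'] at hdu'; linarith
    exact (zpow_le_zpow_iff_right₀ (by norm_num : (1:ℝ) < 2)).mp h2
  set P : ℤ := 2 ^ (k' - kB).toNat with hPdef
  have hP : (2:ℝ) ^ k' = (P : ℝ) * (2:ℝ) ^ kB := by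
    have : k' = ((k' - kB).toNat : ℤ) + kB := by omega
    rw [this, zpow_add₀ (by norm_num : (2:ℝ) ≠ 0)]
    rw [zpow_natCast]
    push_cast [hPdef]
    ring
  suffices hxu' : x ∈ u'.toSet from eq_of_mem S hu hu' hx hxu'
  intro i
  have hyi := hy i
  rw [hc' i, hd'] at hyi
  have hylo : (j' i : ℝ) * (2:ℝ) ^ k' < y i := by
    have := hyi.1; nlinarith [this]
  have hyhi : y i ≤ ((j' i : ℝ) + 1) * (2:ℝ) ^ k' := by
    have := hyi.2; nlinarith [this]
  set q : ℤ := ⌈y i / (2 * B.d)⌉ with hq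
  have hyq : y i ≤ (q : ℝ) * (2 * B.d) := by
    have := Int.le_ceil (y i / (2 * B.d))
    calc y i = y i / (2 * B.d) * (2 * B.d) := by rw [div_mul_cancel₀ _ hlpos.ne']
      _ ≤ (q : ℝ) * (2 * B.d) := by
          apply mul_le_mul_of_nonneg_right _ (le_of_lt hlpos); exact this
  have hyq' : ((q : ℝ) - 1) * (2 * B.d) < y i := by
    have h1 : (q : ℝ) < y i / (2 * B.d) + 1 := Int.ceil_lt_add_one _
    have h2 : ((q:ℝ) - 1) < y i / (2 * B.d) := by linarith
    calc ((q:ℝ) - 1) * (2 * B.d) < y i / (2 * B.d) * (2 * B.d) := by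
          apply mul_lt_mul_of_pos_right h2 hlpos
      _ = y i := by rw [div_mul_cancel₀ _ hlpos.ne']
  -- integer bounds
  have hint1 : j' i * P ≤ q - 1 := by
    have hreal : ((j' i * P : ℤ) : ℝ) * (2:ℝ) ^ kB < (q : ℝ) * (2:ℝ) ^ kB := by
      push_cast
      calc (j' i : ℝ) * (P : ℝ) * (2:ℝ) ^ kB = (j' i : ℝ) * (2:ℝ) ^ k' := by rw [hP]; ring
        _ < y i := hylo
        _ ≤ (q : ℝ) * (2 * B.d) := hyq
        _ = (q : ℝ) * (2:ℝ) ^ kB := by rw [hl]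
    have : ((j' i * P : ℤ) : ℝ) < (q : ℝ) := by
      have hpow : (0:ℝ) < (2:ℝ) ^ kB := by positivity
      exact lt_of_mul_lt_mul_right hreal (le_of_lt hpow)
    have := Int.cast_lt.mp this
    omega
  have hint2 : q ≤ (j' i + 1) * P := by
    have hreal : ((q - 1 : ℤ) : ℝ) * (2:ℝ) ^ kB < (((j' i + 1) * P : ℤ) : ℝ) * (2:ℝ) ^ kB := by
      push_cast
      calc ((q:ℝ) - 1) * (2:ℝ) ^ kB = ((q:ℝ) - 1) * (2 * B.d) := by rw [hl]
        _ < y i := hyq'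
        _ ≤ ((j' i : ℝ) + 1) * (2:ℝ) ^ k' := hyhi
        _ = ((j' i : ℝ) + 1) * (P:ℝ) * (2:ℝ) ^ kB := by rw [hP]; ring
    have : ((q - 1 : ℤ) : ℝ) < (((j' i + 1) * P : ℤ) : ℝ) := by
      have hpow : (0:ℝ) < (2:ℝ) ^ kB := by positivity
      exact lt_of_mul_lt_mul_right hreal (le_of_lt hpow)
    have := Int.cast_lt.mp this
    omega
  -- now x
  have hxq : x i ≤ (q : ℝ) * (2 * B.d) := by
    have := Int.le_ceil (x i / (2 * B.d))
    rw [hphi i, ← hq] at this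
    calc x i = x i / (2 * B.d) * (2 * B.d) := by rw [div_mul_cancel₀ _ hlpos.ne']
      _ ≤ (q : ℝ) * (2 * B.d) := by
          apply mul_le_mul_of_nonneg_right _ (le_of_lt hlpos); exact this
  have hxq' : ((q : ℝ) - 1) * (2 * B.d) < x i := by
    have h1 : (⌈x i / (2 * B.d)⌉ : ℝ) < x i / (2 * B.d) + 1 := Int.ceil_lt_add_one _
    rw [hphi i, ← hq] at h1
    have h2 : ((q:ℝ) - 1) < x i / (2 * B.d) := by linarith
    calc ((q:ℝ) - 1) * (2 * B.d) < x i / (2 * B.d) * (2 * B.d) := by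
          apply mul_lt_mul_of_pos_right h2 hlpos
      _ = x i := by rw [div_mul_cancel₀ _ hlpos.ne']
  rw [hc' i, hd']
  constructor
  · have : ((j' i * P : ℤ) : ℝ) ≤ ((q - 1 : ℤ) : ℝ) := Int.cast_le.mpr hint1
    push_cast at this
    have hpow : (0:ℝ) < (2:ℝ) ^ kB := by positivity
    have hle : (j' i : ℝ) * (2:ℝ) ^ k' ≤ ((q:ℝ) - 1) * (2:ℝ) ^ kB := by
      rw [hP]; nlinarith
    have hlt : (j' i : ℝ) * (2:ℝ) ^ k' < x i := by
      rw [hl] at hxq'; linarith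
    nlinarith [hlt]
  · have : ((q : ℤ) : ℝ) ≤ (((j' i + 1) * P : ℤ) : ℝ) := Int.cast_le.mpr hint2
    push_cast at this
    have hpow : (0:ℝ) < (2:ℝ) ^ kB := by positivity
    have hle : (q:ℝ) * (2:ℝ) ^ kB ≤ ((j' i : ℝ) + 1) * (2:ℝ) ^ k' := by
      rw [hP]; nlinarith
    have hlt : x i ≤ ((j' i : ℝ) + 1) * (2:ℝ) ^ k' := by
      rw [hl] at hxq; linarith
    nlinarith [hlt]

set_option maxHeartbeats 1000000 in
lemma phase (hn : 1 ≤ n) {B : Cube n} (hB : B ∈ S.CZ) (hnk : ¬ Keystone S.CZ B) :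
    ∃ (m : ℕ) (r : ℕ → Cube n), 1 ≤ m ∧ m ≤ 52 * n ∧ r 0 = B ∧
      (∀ i, i ≤ m → r i ∈ S.CZ) ∧
      (∀ i, i < m → Link (r i) (r (i + 1))) ∧
      (∀ i, i < m → B.d ≤ (r i).d ∧ (r i).d ≤ 30000000 * B.d) ∧
      (r m).d ≤ B.d / 2 ∧
      (∀ i, |(r m).c i - B.c i| ≤ (r m).d + 100 * B.d) := by
  classical
  have hdB := d_pos S hB
  have hnall : ¬ ∀ Q' ∈ S.CZ, (Q'.toSet ∩ (B.scale 100).toSet).Nonempty → B.side ≤ Q'.side :=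
    fun h => hnk ⟨hB, h⟩
  push_neg at hnall
  obtain ⟨Q', hQ', hint, hside⟩ := hnall
  have hd' : Q'.d < B.d := by
    unfold Cube.side at hside; linarith
  obtain ⟨z, hzQ', hz100⟩ := hint
  have hz : ∀ i, |z i - B.c i| ≤ 100 * B.d := fun i => abs_sub_center hz100 i
  obtain ⟨m0, hm0, hmin⟩ := min_side S B.c (100 * B.d) (by positivity)
  obtain ⟨M, hM⟩ := exists_nat_gt (100 * B.d / (cG * m0))
  have hq0 : (0:ℝ) < 100 * B.d / (cG * m0) := by have := cG_pos; positivity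
  have hMpos : 0 < M := by
    have h1 : (0:ℝ) < (M:ℝ) := lt_trans hq0 hM
    exact_mod_cast h1
  have hMR : (0:ℝ) < (M:ℝ) := by exact_mod_cast hMpos
  have hstep : 100 * B.d / (M:ℝ) < cG * m0 := by
    rw [div_lt_iff₀ hMR]
    rw [div_lt_iff₀ (by have := cG_pos; positivity)] at hM
    linarith
  obtain ⟨p, hpdef⟩ : ∃ p : ℕ → Fin n → ℝ,
      ∀ j i, p j i = B.c i + ((j:ℝ)/(M:ℝ)) * (z i - B.c i) :=
    ⟨fun j i => B.c i + ((j:ℝ)/(M:ℝ)) * (z i - B.c i), fun _ _ => rfl⟩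
  have hpmem : ∀ j, j ≤ M → ∀ i, |p j i - B.c i| ≤ 100 * B.d := by
    intro j hj i
    have : p j i - B.c i = ((j:ℝ)/(M:ℝ)) * (z i - B.c i) := by rw [hpdef]; ring
    rw [this, abs_mul]
    have h1 : |(j:ℝ)/(M:ℝ)| ≤ 1 := by
      rw [abs_of_nonneg (by positivity)]
      rw [div_le_one hMR]
      exact_mod_cast hj
    calc |(j:ℝ)/(M:ℝ)| * |z i - B.c i| ≤ 1 * (100 * B.d) := by
          apply mul_le_mul h1 (hz i) (abs_nonneg _) zero_le_one
      _ = 100 * B.d := one_mul _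
  obtain ⟨u, hudef⟩ : ∃ u : ℕ → Cube n, ∀ j, u j = cubeAt S (p j) :=
    ⟨fun j => cubeAt S (p j), fun _ => rfl⟩
  have huCZ : ∀ j, u j ∈ S.CZ := fun j => (hudef j) ▸ cubeAt_mem S (p j)
  have hup : ∀ j, p j ∈ (u j).toSet := fun j => (hudef j) ▸ mem_cubeAt S (p j)
  have hp0 : p 0 = B.c := by funext i; rw [hpdef]; simp
  have hu0 : u 0 = B := by
    rw [hudef, hp0]; exact cubeAt_eq S hB (center_mem hdB)
  have hpM : p M = z := by
    funext i
    rw [hpdef, div_self (ne_of_gt hMR)]; ring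
  have huM : u M = Q' := by
    rw [hudef, hpM]; exact cubeAt_eq S hQ' hzQ'
  have hupper : ∀ j, j ≤ M → (u j).d ≤ 30000000 * B.d := fun j hj =>
    size_upper S hB (huCZ j) (hup j) (fun i => le_trans (hpmem j hj i) (by linarith))
  have hlower : ∀ j, j ≤ M → m0 ≤ (u j).d := fun j hj =>
    hmin (u j) (huCZ j) (p j) (hup j) (hpmem j hj)
  -- stopping index
  have hJex : ∃ j, j ≤ M ∧ (u j).d < B.d := ⟨M, le_refl M, by rw [huM]; exact hd'⟩
  set J := Nat.find hJex with hJdef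
  have hJM : J ≤ M := (Nat.find_spec hJex).1
  have hJd : (u J).d < B.d := (Nat.find_spec hJex).2
  have hJmin : ∀ j, j < J → B.d ≤ (u j).d := by
    intro j hj
    have h := Nat.find_min hJex hj
    push_neg at h
    exact h (le_trans (le_of_lt hj) hJM)
  have hJ1 : 1 ≤ J := by
    by_contra h
    push_neg at h
    interval_cases J
    rw [hu0] at hJd
    exact lt_irrefl _ hJd
  -- links between consecutive walk cubes
  have hlink : ∀ j, j + 1 ≤ M → Link (u j) (u (j + 1)) := by
    intro j hj
    have hdj := d_pos S (huCZ j)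
    have hdj1 := d_pos S (huCZ (j + 1))
    have hcgp := cG_pos
    have hposa : (0:ℝ) < (1 + cG) * (u j).d := by positivity
    have hposb : (0:ℝ) < (1 + cG) * (u (j+1)).d := by positivity
    refine (inter_nonempty_iff hposa hposb).mpr fun i => ?_
    have h1 : |p j i - (u j).c i| ≤ (u j).d := abs_sub_center (hup j) i
    have h2 : |p (j+1) i - (u (j+1)).c i| ≤ (u (j+1)).d := abs_sub_center (hup (j+1)) i
    have h3 : |p (j+1) i - p j i| < cG * m0 := by
      have heq : p (j+1) i - p j i = (z i - B.c i) / (M:ℝ) := by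
        rw [hpdef, hpdef]
        push_cast
        field_simp
        ring
      rw [heq, abs_div, abs_of_nonneg (le_of_lt hMR)]
      calc |z i - B.c i| / (M:ℝ) ≤ 100 * B.d / (M:ℝ) := by
            gcongr
            exact hz i
        _ < cG * m0 := hstep
    have hm1 : m0 ≤ (u j).d := hlower j (by omega)
    have habs : |(u j).c i - (u (j+1)).c i| ≤
        (u j).d + cG * m0 + (u (j+1)).d := by
      have : |(u j).c i - (u (j+1)).c i| ≤
          |p j i - (u j).c i| + |p (j+1) i - p j i| + |p (j+1) i - (u (j+1)).c i| := by
        calc |(u j).c i - (u (j+1)).c i|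
            = |(-(p j i - (u j).c i)) + (-(p (j+1) i - p j i)) + (p (j+1) i - (u (j+1)).c i)| := by
              ring_nf
          _ ≤ |(-(p j i - (u j).c i)) + (-(p (j+1) i - p j i))| + |p (j+1) i - (u (j+1)).c i| :=
              abs_add_le _ _
          _ ≤ |(-(p j i - (u j).c i))| + |(-(p (j+1) i - p j i))| + |p (j+1) i - (u (j+1)).c i| := by
              linarith [abs_add_le (-(p j i - (u j).c i)) (-(p (j+1) i - p j i))]
          _ = |p j i - (u j).c i| + |p (j+1) i - p j i| + |p (j+1) i - (u (j+1)).c i| := by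
              rw [abs_neg, abs_neg]
      linarith [h1, h2, le_of_lt h3]
    nlinarith [habs, hm1, hdj1, hcgp, hdj]
  -- the walk never revisits after the stop
  have hneJ : ∀ j, j < J → u J ≠ u j := by
    intro j hj heq
    have h1 := hJmin j hj
    rw [← heq] at h1
    linarith
  set nxt : ℕ → ℕ := fun j =>
    if h : j < J then Nat.find (⟨J, h, le_refl J, hneJ j h⟩ : ∃ t, j < t ∧ t ≤ J ∧ u t ≠ u j)
    else J with hnxtdef
  have hnxt : ∀ j, j < J → (j < nxt j ∧ nxt j ≤ J ∧ u (nxt j) ≠ u j ∧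
      ∀ t, j < t → t < nxt j → u t = u j) := by
    intro j hj
    have hex : ∃ t, j < t ∧ t ≤ J ∧ u t ≠ u j := ⟨J, hj, le_refl J, hneJ j hj⟩
    have hval : nxt j = Nat.find hex := by rw [hnxtdef]; simp only [dif_pos hj]
    have hspec := Nat.find_spec hex
    rw [← hval] at hspec
    refine ⟨hspec.1, hspec.2.1, hspec.2.2, ?_⟩
    intro t ht1 ht2
    rw [hval] at ht2
    have := Nat.find_min hex ht2
    push_neg at this
    by_contra hne
    have h5 : Nat.find hex ≤ J := by rw [← hval]; exact hspec.2.1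
    exact hne (this ht1 (by omega))
  have hnxtJ : nxt J = J := by rw [hnxtdef]; simp only [dif_neg (lt_irrefl J)]
  set s : ℕ → ℕ := fun i => nxt^[i] 0 with hsdef
  have hs0 : s 0 = 0 := rfl
  have hssucc : ∀ i, s (i + 1) = nxt (s i) := fun i => Function.iterate_succ_apply' nxt i 0
  have hsJ : ∀ i, s i ≤ J := by
    intro i
    induction i with
    | zero => exact Nat.zero_le J
    | succ i ih =>
      rw [hssucc]
      by_cases h : s i < J
      · exact (hnxt (s i) h).2.1
      · have : s i = J := by omega
        rw [this, hnxtJ]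
  have hreach : ∀ i, i ≤ s i ∨ s i = J := by
    intro i
    induction i with
    | zero => exact Or.inl (le_refl 0)
    | succ i ih =>
      by_cases h : s i < J
      · rcases ih with h1 | h1
        · left
          have := (hnxt (s i) h).1
          rw [hssucc]; omega
        · omega
      · right
        have hsi : s i = J := by have := hsJ i; omega
        rw [hssucc, hsi, hnxtJ]
  have hsJJ : s J = J := by
    rcases hreach J with h | h
    · have := hsJ J; omega
    · exact h
  have hmex : ∃ i, s i = J := ⟨J, hsJJ⟩
  set m := Nat.find hmex with hmdef
  have hsm : s m = J := Nat.find_spec hmex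
  have hslt : ∀ i, i < m → s i < J := fun i hi =>
    lt_of_le_of_ne (hsJ i) (Nat.find_min hmex hi)
  have hm1 : 1 ≤ m := by
    by_contra h
    push_neg at h
    interval_cases m
    rw [hs0] at hsm
    omega
  -- the ψ counting function
  set sg : Fin n → ℤ := fun i => if B.c i ≤ z i then 1 else -1 with hsg
  set psi : ℕ → ℤ := fun j => ∑ i, sg i * ⌈p j i / (2 * B.d)⌉ with hpsi
  have hpdiff : ∀ j i, p (j+1) i - p j i = (z i - B.c i) / (M:ℝ) := by
    intro j i
    rw [hpdef, hpdef]
    push_cast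
    field_simp
    ring
  have hterm : ∀ j i, sg i * ⌈p j i / (2 * B.d)⌉ ≤ sg i * ⌈p (j+1) i / (2 * B.d)⌉ := by
    intro j i
    by_cases h : B.c i ≤ z i
    · have hzc : (0:ℝ) ≤ z i - B.c i := by linarith
      have hple : p j i ≤ p (j+1) i := by
        have h9 := hpdiff j i
        have h10 : (0:ℝ) ≤ (z i - B.c i) / (M:ℝ) := div_nonneg hzc (le_of_lt hMR)
        linarith
      have hdiv : p j i / (2 * B.d) ≤ p (j+1) i / (2 * B.d) := by gcongr
      have hcl : ⌈p j i / (2 * B.d)⌉ ≤ ⌈p (j+1) i / (2 * B.d)⌉ := Int.ceil_le_ceil hdiv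
      simp only [hsg, if_pos h, one_mul]
      exact hcl
    · push_neg at h
      have hzc : z i - B.c i ≤ 0 := by linarith
      have hple : p (j+1) i ≤ p j i := by
        have h9 := hpdiff j i
        have h10 : (z i - B.c i) / (M:ℝ) ≤ 0 :=
          div_nonpos_of_nonpos_of_nonneg hzc (le_of_lt hMR)
        linarith
      have hdiv : p (j+1) i / (2 * B.d) ≤ p j i / (2 * B.d) := by gcongr
      have hcl : ⌈p (j+1) i / (2 * B.d)⌉ ≤ ⌈p j i / (2 * B.d)⌉ := Int.ceil_le_ceil hdiv
      simp only [hsg, if_neg (not_le.mpr h), neg_mul, one_mul, neg_le_neg_iff]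
      exact hcl
  have hpsimono : ∀ j j', j ≤ j' → psi j ≤ psi j' := by
    intro j j' hjj
    induction j' with
    | zero => have : j = 0 := by omega
              rw [this]
    | succ j' ih =>
      rcases Nat.lt_succ_iff_lt_or_eq.mp (Nat.lt_succ_of_le hjj) with h | h
      · have h1 := ih (by omega)
        have h2 : psi j' ≤ psi (j' + 1) := Finset.sum_le_sum fun i _ => hterm j' i
        omega
      · rw [h]
  have hstep1 : ∀ t, 1 ≤ t → t < J → u t ≠ u (t - 1) → psi (t - 1) + 1 ≤ psi t := by
    intro t ht1 htJ hne
    have ht' : t - 1 + 1 = t := by omega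
    have hchange : ¬ ∀ i, ⌈p (t-1) i / (2 * B.d)⌉ = ⌈p t i / (2 * B.d)⌉ := by
      intro hall
      exact hne (grid_eq S hB (huCZ (t-1)) (huCZ t) (hJmin t htJ) (hup (t-1)) (hup t) hall).symm
    push_neg at hchange
    obtain ⟨i0, hi0⟩ := hchange
    have hlt : psi (t-1) < psi t := by
      rw [hpsi]
      apply Finset.sum_lt_sum
      · intro i _
        have := hterm (t-1) i
        rw [ht'] at this
        exact this
      · refine ⟨i0, Finset.mem_univ i0, ?_⟩
        have hle := hterm (t-1) i0
        rw [ht'] at hle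
        apply lt_of_le_of_ne hle
        intro heq
        apply hi0
        by_cases h : B.c i0 ≤ z i0
        · simp only [hsg, if_pos h, one_mul] at heq; exact heq
        · simp only [hsg, if_neg h, neg_mul, one_mul, neg_inj] at heq; exact heq
    omega
  have hcount : ∀ i, i < m → psi 0 + i ≤ psi (s i) := by
    intro i
    induction i with
    | zero => intro _; rw [hs0]; omega
    | succ i ih =>
      intro hi
      have hi' : i < m := by omega
      have h1 := ih hi'
      set t := s (i + 1) with htdef
      have hsilt := hslt i hi'
      obtain ⟨ha, hb, hc, hd⟩ := hnxt (s i) hsilt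
      have htn : t = nxt (s i) := htdef.trans (hssucc i)
      have htlt : t < J := hslt (i+1) hi
      have ht1 : 1 ≤ t := by omega
      have hut1 : u (t - 1) = u (s i) := by
        rcases Nat.lt_or_ge (s i) (t - 1) with h | h
        · exact hd (t-1) h (by omega)
        · have he9 : t - 1 = s i := by omega
          rw [he9]
      have hne : u t ≠ u (t - 1) := by
        rw [hut1, htn]
        exact hc
      have h2 := hstep1 t ht1 htlt hne
      have h3 : psi (s i) ≤ psi (t - 1) := hpsimono _ _ (by omega)
      push_cast
      push_cast at h1
      omega
  -- upper bound on psi increments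
  have hpsibound : ∀ j, j ≤ M → psi j ≤ psi 0 + 51 * n := by
    intro j hj
    have hterm51 : ∀ i : Fin n,
        sg i * ⌈p j i / (2 * B.d)⌉ - sg i * ⌈p 0 i / (2 * B.d)⌉ ≤ 51 := by
      intro i
      have hdiff : |p j i - p 0 i| ≤ 100 * B.d := by
        rw [hp0]
        exact hpmem j hj i
      have hspan : |p j i / (2 * B.d) - p 0 i / (2 * B.d)| ≤ 50 := by
        rw [div_sub_div_same, abs_div, abs_of_pos (by positivity : (0:ℝ) < 2 * B.d)]
        rw [div_le_iff₀ (by positivity : (0:ℝ) < 2 * B.d)]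
        linarith
      have habs := abs_le.mp hspan
      have c1 : (⌈p j i / (2 * B.d)⌉ : ℝ) < p j i / (2 * B.d) + 1 := Int.ceil_lt_add_one _
      have c2 : p 0 i / (2 * B.d) ≤ (⌈p 0 i / (2 * B.d)⌉ : ℝ) := Int.le_ceil _
      have c3 : (⌈p 0 i / (2 * B.d)⌉ : ℝ) < p 0 i / (2 * B.d) + 1 := Int.ceil_lt_add_one _
      have c4 : p j i / (2 * B.d) ≤ (⌈p j i / (2 * B.d)⌉ : ℝ) := Int.le_ceil _
      by_cases h : B.c i ≤ z i
      · simp only [hsg, if_pos h, one_mul]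
        have hr : ((⌈p j i / (2 * B.d)⌉ - ⌈p 0 i / (2 * B.d)⌉ : ℤ) : ℝ) < 52 := by
          push_cast
          linarith [habs.2]
        have hz52 : (⌈p j i / (2 * B.d)⌉ - ⌈p 0 i / (2 * B.d)⌉ : ℤ) < 52 := by exact_mod_cast hr
        omega
      · simp only [hsg, if_neg h, neg_mul, one_mul]
        have hr : ((⌈p 0 i / (2 * B.d)⌉ - ⌈p j i / (2 * B.d)⌉ : ℤ) : ℝ) < 52 := by
          push_cast
          linarith [habs.1]
        have hz52 : (⌈p 0 i / (2 * B.d)⌉ - ⌈p j i / (2 * B.d)⌉ : ℤ) < 52 := by exact_mod_cast hr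
        omega
    have hsum : psi j - psi 0 ≤ 51 * n := by
      rw [hpsi]
      rw [← Finset.sum_sub_distrib]
      calc ∑ i, (sg i * ⌈p j i / (2 * B.d)⌉ - sg i * ⌈p 0 i / (2 * B.d)⌉)
          ≤ ∑ _i : Fin n, (51:ℤ) := Finset.sum_le_sum fun i _ => hterm51 i
        _ = 51 * n := by
            rw [Finset.sum_const, Finset.card_univ, Fintype.card_fin]
            push_cast
            ring
    omega
  have hmle : m ≤ 52 * n := by
    have h1 := hcount (m-1) (by omega)
    have h2 := hpsibound (s (m-1)) (le_trans (hsJ _) hJM)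
    have hcast : ((m - 1 : ℕ) : ℤ) = (m : ℤ) - 1 := by
      have : 1 ≤ m := hm1
      push_cast [Nat.cast_sub this]
      ring
    rw [hcast] at h1
    have hle : (m : ℤ) - 1 ≤ 51 * n := by omega
    have : (m : ℤ) ≤ 52 * n := by
      have hn' : (1:ℤ) ≤ n := by exact_mod_cast hn
      omega
    exact_mod_cast this
  refine ⟨m, fun i => u (s i), hm1, hmle, ?_, ?_, ?_, ?_, ?_, ?_⟩
  · show u (s 0) = B
    rw [hs0]; exact hu0
  · exact fun i _ => huCZ (s i)
  · intro i hi
    have hsilt := hslt i hi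
    obtain ⟨ha, hb, hc, hd⟩ := hnxt (s i) hsilt
    set t := s (i + 1) with htdef
    have htn : t = nxt (s i) := htdef.trans (hssucc i)
    have ht1 : 1 ≤ t := by omega
    have hut1 : u (t - 1) = u (s i) := by
      rcases Nat.lt_or_ge (s i) (t - 1) with h | h
      · exact hd (t-1) h (by omega)
      · have he9 : t - 1 = s i := by omega
        rw [he9]
    have hlk := hlink (t - 1) (by
      have h8 : t ≤ J := by rw [htn]; exact hb
      omega)
    have ht' : t - 1 + 1 = t := by omega
    rw [ht', hut1] at hlk
    exact hlk
  · intro i hi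
    exact ⟨hJmin (s i) (hslt i hi), hupper (s i) (le_trans (hsJ _) hJM)⟩
  · show (u (s m)).d ≤ B.d / 2
    rw [hsm]
    exact dyadic_halving S hB (huCZ J) hJd
  · intro i
    show |(u (s m)).c i - B.c i| ≤ (u (s m)).d + 100 * B.d
    rw [hsm]
    have h1 : |p J i - (u J).c i| ≤ (u J).d := abs_sub_center (hup J) i
    have h2 : |p J i - B.c i| ≤ 100 * B.d := hpmem J hJM i
    calc |(u J).c i - B.c i| = |(-(p J i - (u J).c i)) + (p J i - B.c i)| := by ring_nf
      _ ≤ |(-(p J i - (u J).c i))| + |p J i - B.c i| := abs_add_le _ _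
      _ = |p J i - (u J).c i| + |p J i - B.c i| := by rw [abs_neg]
      _ ≤ (u J).d + 100 * B.d := by linarith

def GoodPath (S : CZSetting n) (ρ : ℝ) (B : Cube n) (L : ℕ) (seq : ℕ → Cube n) : Prop :=
  1 ≤ L ∧ seq 0 = B ∧ (∀ t, t < L → seq t ∈ S.CZ) ∧
  (∀ t, t + 1 < L → Link (seq t) (seq (t + 1))) ∧
  Keystone S.CZ (seq (L - 1)) ∧
  (∀ i j, i ≤ j → j < L → (seq j).d ≤ 120000000 * ρ ^ (j - i) * (seq i).d)

lemma reach (hn : 1 ≤ n) (ρ : ℝ) (hρ0 : 0 < ρ) (hρ1 : ρ ≤ 1) (hρM : ρ ^ (52 * n) = 1 / 2)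
    (x0 : Fin n → ℝ) (R0 m0 : ℝ) (hm0 : 0 < m0)
    (hmin : ∀ Q' ∈ S.CZ, ∀ y ∈ Q'.toSet, (∀ i, |y i - x0 i| ≤ R0) → m0 ≤ Q'.d) :
    ∀ F : ℕ, ∀ B, B ∈ S.CZ → (∀ i, |B.c i - x0 i| + 407 * B.d ≤ R0) →
      B.d < 2 ^ F * m0 → ∃ L seq, GoodPath S ρ B L seq := by
  intro F
  induction F with
  | zero =>
    intro B hB hball hF
    exfalso
    have hdB := d_pos S hB
    have h1 : m0 ≤ B.d := by
      refine hmin B hB B.c (center_mem hdB) fun i => ?_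
      have := hball i
      linarith
    norm_num at hF
    linarith
  | succ F ih =>
    intro B hB hball hF
    have hdB := d_pos S hB
    by_cases hk : Keystone S.CZ B
    · refine ⟨1, fun _ => B, le_refl 1, rfl, fun t _ => hB, fun t ht => absurd ht (by omega),
        hk, ?_⟩
      intro i j hij hj
      have hi0 : i = 0 := by omega
      have hj0 : j = 0 := by omega
      subst hi0; subst hj0
      simp only [Nat.sub_zero, pow_zero, mul_one]
      nlinarith [hdB]
    · obtain ⟨m, r, hm1, hmle, hr0, hrCZ, hrlink, hrbd, hrm, hrc⟩ := phase S hn hB hk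
      have hB' : r m ∈ S.CZ := hrCZ m (le_refl m)
      have hdB' := d_pos S hB'
      have hball' : ∀ i, |(r m).c i - x0 i| + 407 * (r m).d ≤ R0 := by
        intro i
        have h1 := hrc i
        have h2 := hball i
        have h3 : |(r m).c i - x0 i| ≤ |(r m).c i - B.c i| + |B.c i - x0 i| :=
          abs_sub_le _ _ _
        linarith [hrm]
      have hF' : (r m).d < 2 ^ F * m0 := by
        have hps : (2:ℝ) ^ (F + 1) = 2 * 2 ^ F := by ring
        rw [hps] at hF
        linarith [hrm]
      obtain ⟨L', seq', hL1, hseq0, hmem, hlink', hkey, hdecay⟩ := ih (r m) hB' hball' hF'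
      refine ⟨m + L', fun t => if t < m then r t else seq' (t - m), by omega, ?_, ?_, ?_, ?_, ?_⟩
      · simp only [if_pos (by omega : 0 < m)]
        exact hr0
      · intro t ht
        by_cases htm : t < m
        · simp only [if_pos htm]; exact hrCZ t (le_of_lt htm)
        · simp only [if_neg htm]; exact hmem (t - m) (by omega)
      · intro t ht
        by_cases h1 : t + 1 < m
        · simp only [if_pos (by omega : t < m), if_pos h1]
          exact hrlink t (by omega)
        · by_cases h2 : t + 1 = m
          · simp only [if_pos (by omega : t < m), if_neg (by omega : ¬ t + 1 < m)]
            have he : t + 1 - m = 0 := by omega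
            rw [he, hseq0]
            have := hrlink t (by omega)
            have he2 : t + 1 = m := h2
            rw [he2] at this
            exact this
          · simp only [if_neg (by omega : ¬ t < m), if_neg (by omega : ¬ t + 1 < m)]
            have he : t + 1 - m = (t - m) + 1 := by omega
            rw [he]
            exact hlink' (t - m) (by omega)
      · have h9 : ¬ (m + L' - 1 < m) := by omega
        simp only [if_neg h9]
        have he : m + L' - 1 - m = L' - 1 := by omega
        rw [he]
        exact hkey
      · intro i j hij hjL
        by_cases hjm : j < m
        · have him : i < m := lt_of_le_of_lt hij hjm
          simp only [if_pos hjm, if_pos him]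
          have h1 := hrbd j hjm
          have h2 := hrbd i him
          have hdi := d_pos S (hrCZ i (le_of_lt him))
          have hρji : (1:ℝ) / 2 ≤ ρ ^ (j - i) := by
            rw [← hρM]
            exact pow_le_pow_of_le_one (le_of_lt hρ0) hρ1 (by omega)
          nlinarith [h1.2, h2.1, hρji, hdi, hdB]
        · push_neg at hjm
          have hj' : j - m < L' := by omega
          simp only [if_neg (by omega : ¬ j < m)]
          by_cases him : i < m
          · simp only [if_pos him]
            have h0 := hdecay 0 (j - m) (Nat.zero_le _) hj'
            rw [hseq0, Nat.sub_zero] at h0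
            have h2 := (hrbd i him).1
            have hsplit : ρ ^ (j - i) = ρ ^ (j - m) * ρ ^ (m - i) := by
              rw [← pow_add]
              congr 1
              omega
            have hmi : ρ ^ (52 * n) ≤ ρ ^ (m - i) :=
              pow_le_pow_of_le_one (le_of_lt hρ0) hρ1 (by omega)
            have hdi := d_pos S (hrCZ i (le_of_lt him))
            calc (seq' (j - m)).d ≤ 120000000 * ρ ^ (j - m) * (r m).d := h0
              _ ≤ 120000000 * ρ ^ (j - m) * (B.d / 2) := by
                  have hc : (0:ℝ) ≤ 120000000 * ρ ^ (j - m) := by positivity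
                  exact mul_le_mul_of_nonneg_left hrm hc
              _ = 120000000 * ρ ^ (j - m) * (ρ ^ (52 * n) * B.d) := by rw [hρM]; ring
              _ ≤ 120000000 * ρ ^ (j - m) * (ρ ^ (m - i) * B.d) := by
                  have hc : (0:ℝ) ≤ 120000000 * ρ ^ (j - m) := by positivity
                  refine mul_le_mul_of_nonneg_left ?_ hc
                  exact mul_le_mul_of_nonneg_right hmi (le_of_lt hdB)
              _ = 120000000 * ρ ^ (j - i) * B.d := by rw [hsplit]; ring
              _ ≤ 120000000 * ρ ^ (j - i) * (r i).d := by
                  have hc : (0:ℝ) ≤ 120000000 * ρ ^ (j - i) := by positivity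
                  exact mul_le_mul_of_nonneg_left h2 hc
          · simp only [if_neg him]
            have h0 := hdecay (i - m) (j - m) (by omega) hj'
            have he : (j - m) - (i - m) = j - i := by omega
            rw [he] at h0
            exact h0

end CZLemma

/-- **Lemma 5.14 (Lemma 10): from every CZ cube there is a connected geometrically
decaying path of CZ cubes ending at a keystone cube.** -/
theorem statement15 (n : ℕ) (hn : 1 ≤ n) :
    ∃ C c : ℝ, 0 < C ∧ 0 < c ∧ c < 1 ∧
      ∀ S : CZSetting n, ∀ Q ∈ S.CZ,
        ∃ (L : ℕ) (seq : ℕ → Cube n),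
          1 ≤ L ∧
          (∀ l < L, seq l ∈ S.CZ) ∧
          seq 0 = Q ∧
          Keystone S.CZ (seq (L - 1)) ∧
          (∀ l, l + 1 < L →
            (((seq l).scale (1 + cG)).toSet ∩
              ((seq (l + 1)).scale (1 + cG)).toSet).Nonempty) ∧
          (∀ l k, l ≤ k → k < L →
            (seq k).side ≤ C * (1 - c) ^ (k - l) * (seq l).side) := by
  classical
  have hNpos : (0:ℝ) < ((52 * n : ℕ) : ℝ) := by
    have : 0 < 52 * n := by omega
    exact_mod_cast this
  set ρ : ℝ := (2:ℝ) ^ (-(1:ℝ) / ((52 * n : ℕ) : ℝ)) with hρdef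
  have hρ0 : 0 < ρ := Real.rpow_pos_of_pos (by norm_num) _
  have hρ1 : ρ < 1 :=
    Real.rpow_lt_one_of_one_lt_of_neg (by norm_num)
      (div_neg_of_neg_of_pos (by norm_num) hNpos)
  have hρM : ρ ^ (52 * n) = 1 / 2 := by
    rw [hρdef, ← Real.rpow_natCast ((2:ℝ) ^ (-(1:ℝ) / ((52 * n : ℕ) : ℝ))) (52 * n)]
    rw [← Real.rpow_mul (by norm_num : (0:ℝ) ≤ 2)]
    have he : -(1:ℝ) / ((52 * n : ℕ) : ℝ) * ((52 * n : ℕ) : ℝ) = -1 := by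
      field_simp
    rw [he]
    rw [Real.rpow_neg_one]
    norm_num
  refine ⟨120000000, 1 - ρ, by norm_num, by linarith, by linarith, ?_⟩
  intro S Q hQ
  have hdQ := CZLemma.d_pos S hQ
  obtain ⟨m0, hm0, hmin⟩ := CZLemma.min_side S Q.c (407 * Q.d) (by positivity)
  obtain ⟨F, hF⟩ := pow_unbounded_of_one_lt (Q.d / m0) (by norm_num : (1:ℝ) < 2)
  have hFd : Q.d < 2 ^ F * m0 := by
    rw [div_lt_iff₀ hm0] at hF
    linarith
  have hball : ∀ i, |Q.c i - Q.c i| + 407 * Q.d ≤ 407 * Q.d := by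
    intro i; simp
  obtain ⟨L, seq, hL1, hseq0, hmem, hlink, hkey, hdecay⟩ :=
    CZLemma.reach S hn ρ hρ0 (le_of_lt hρ1) hρM Q.c (407 * Q.d) m0 hm0 hmin F Q hQ hball hFd
  refine ⟨L, seq, hL1, fun l hl => hmem l hl, hseq0, hkey, fun l hl => hlink l hl, ?_⟩
  intro l k hlk hkL
  have h := hdecay l k hlk hkL
  have hc : (1:ℝ) - (1 - ρ) = ρ := by ring
  rw [hc]
  unfold Cube.side
  linarith
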